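/- For all integers n ≥ 1 and i ≥ 2, the F2-dimension of the space Gov(V_[n], i) spanned by the governing tensors equals (i−1)·binom(n, i). -/
import Mathlib


abbrev F2 := ZMod 2

namespace HigherGenus

abbrev V (ι : Type) := ι → F2

abbrev ML (ι : Type) (i : ℕ) := MultilinearMap F2 (fun _ : Fin i => V ι) F2

variable {ι : Type} [Fintype ι] [DecidableEq ι]

/-- The tensor product of a family of linear functionals, as a multilinear map. -/
noncomputable def funcTensor {i : ℕ} (L : Fin i → (V ι →ₗ[F2] F2)) : ML ι i :=
  (MultilinearMap.mkPiAlgebra F2 (Fin i) F2).compLinearMap L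

/-- `χ_{h 1} ⊗ ⋯ ⊗ χ_{h i}` as a multilinear map. -/
noncomputable def chiTensor (i : ℕ) (h : Fin i → ι) : ML ι i :=
  funcTensor (fun p => LinearMap.proj (h p))

/-- The governing tensor `φ_{(A,x)}`: the sum of `χ_{τ(1)}⊗⋯⊗χ_{τ(i)}` over all bijections
`τ : [i] ≃ A` placing `x` in one of the last two positions. -/
noncomputable def govTensor (i : ℕ) (A : Finset ι) (x : ι) : ML ι i :=
  ∑ τ : Fin i ≃ {a // a ∈ A},
    if ∀ p : Fin i, ((τ p : ι) = x → i ≤ (p : ℕ) + 2) then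
      chiTensor i (fun p => (τ p : ι)) else 0

/-- `Gov(V_B, i)`: the span of the governing tensors supported in `B`. -/
noncomputable def Gov (i : ℕ) (B : Finset ι) : Submodule F2 (ML ι i) :=
  Submodule.span F2
    {φ | ∃ A : Finset ι, ∃ x : ι, A ⊆ B ∧ A.card = i ∧ x ∈ A ∧ φ = govTensor i A x}

/-- `Multi~(V_B, i)`: the span of the injective pure tensors supported in `B`. -/
noncomputable def MultiT (i : ℕ) (B : Finset ι) : Submodule F2 (ML ι i) :=
  Submodule.span F2
    {φ | ∃ τ : Fin i → ι, Function.Injective τ ∧ (∀ p, τ p ∈ B) ∧ φ = chiTensor i τ}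

/-- Evaluation of a multilinear map at a fixed tuple, as a linear map. -/
def mEval {i : ℕ} (σ : Fin i → V ι) : ML ι i →ₗ[F2] F2 where
  toFun b := b σ
  map_add' _ _ := rfl
  map_smul' _ _ := rfl

/-- Plugging the vector `v` into the first slot of a multilinear map. -/
noncomputable def consMapL {i : ℕ} (v : V ι) : ML ι (i + 1) →ₗ[F2] ML ι i :=
  (LinearMap.applyₗ v).comp
    (multilinearCurryLeftEquiv F2 (fun _ : Fin (i + 1) => V ι) F2).toLinearMap

/-- The standard basis vector `e_j`. -/
def stdb (j : ι) : V ι := Pi.single j 1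

/-- The recursively defined subspaces `Cons(V_B, i)`. -/
noncomputable def Cons : (i : ℕ) → Finset ι → Submodule F2 (ML ι i)
  | 0, _ => ⊥
  | 1, B => Gov 1 B
  | 2, B => MultiT 2 B ⊓
      (⨅ σ : Fin 2 → V ι, LinearMap.ker (mEval σ - mEval (σ ∘ (Equiv.swap 0 1))))
  | 3, B => (MultiT 3 B ⊓
      (⨅ j ∈ B, Submodule.comap (consMapL (stdb j)) (Cons 2 (B.erase j)))) ⊓
      (⨅ j₁ : ι, ⨅ j₂ : ι, ⨅ j₃ : ι,
        LinearMap.ker (mEval ![stdb j₁, stdb j₂, stdb j₃]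
          + mEval ![stdb j₃, stdb j₁, stdb j₂] + mEval ![stdb j₂, stdb j₃, stdb j₁]))
  | (i+4), B => (MultiT (i+4) B ⊓
      (⨅ j ∈ B, Submodule.comap (consMapL (stdb j)) (Cons (i+3) (B.erase j)))) ⊓
      (⨅ j₁ : ι, ⨅ j₂ : ι, ⨅ _ : j₁ ≠ j₂,
        LinearMap.ker ((consMapL (stdb j₂)).comp (consMapL (stdb j₁))
          - (consMapL (stdb j₁)).comp (consMapL (stdb j₂))))


set_option linter.unusedSectionVars false
section Lemmas
variable {ι : Type} [Fintype ι] [DecidableEq ι]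

lemma chiTensor_apply {i : ℕ} (h : Fin i → ι) (σ : Fin i → V ι) :
    chiTensor i h σ = ∏ p, σ p (h p) := by
  simp [chiTensor, funcTensor]

lemma stdb_apply (j k : ι) : stdb j k = if k = j then 1 else 0 := by
  simp [stdb, Pi.single_apply]

lemma chiTensor_stdb {i : ℕ} (h g : Fin i → ι) :
    chiTensor i h (fun p => stdb (g p)) = if h = g then 1 else 0 := by
  rw [chiTensor_apply]
  by_cases hg : h = g
  · simp [hg, stdb_apply]
  · rw [if_neg hg]
    obtain ⟨p, hp⟩ := Function.ne_iff.mp hg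
    exact Finset.prod_eq_zero (Finset.mem_univ p) (by simp [stdb_apply, hp])

lemma fin_last_two {i : ℕ} (hi : 2 ≤ i) (p : Fin i) :
    i ≤ (p : ℕ) + 2 ↔ p = ⟨i - 2, by omega⟩ ∨ p = ⟨i - 1, by omega⟩ := by
  have := p.isLt
  constructor
  · intro h
    rcases Nat.lt_or_ge (p : ℕ) (i-1) with h1 | h1
    · left; exact Fin.ext (show (p:ℕ) = i - 2 by omega)
    · right; exact Fin.ext (show (p:ℕ) = i - 1 by omega)
  · rintro (rfl | rfl) <;> · show i ≤ _ + 2; simp only [Fin.val_mk]; omega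

lemma coe_equiv_injective {i : ℕ} {A : Finset ι} :
    Function.Injective (fun τ : Fin i ≃ {a // a ∈ A} => fun p => (τ p : ι)) := by
  intro τ₁ τ₂ h
  ext p
  exact congrFun h p

lemma govTensor_eval_equiv {i : ℕ} (A : Finset ι) (x : ι) (τ₀ : Fin i ≃ {a // a ∈ A}) :
    govTensor i A x (fun p => stdb (τ₀ p)) =
      if ∀ p : Fin i, ((τ₀ p : ι) = x → i ≤ (p : ℕ) + 2) then 1 else 0 := by
  rw [govTensor, MultilinearMap.sum_apply]
  rw [Finset.sum_eq_single τ₀]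
  · split <;> simp_all [chiTensor_stdb]
  · intro τ _ hτ
    have hne : (fun p => (τ p : ι)) ≠ (fun p => (τ₀ p : ι)) := by
      intro h
      exact hτ (by ext p; exact congrFun h p)
    split
    · rw [chiTensor_stdb, if_neg hne]
    · rfl
  · simp

lemma govTensor_eval_zero {i : ℕ} (A : Finset ι) (x : ι) (g : Fin i → ι)
    (hg : ∀ τ : Fin i ≃ {a // a ∈ A}, (fun p => (τ p : ι)) ≠ g) :
    govTensor i A x (fun p => stdb (g p)) = 0 := by
  rw [govTensor, MultilinearMap.sum_apply]
  apply Finset.sum_eq_zero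
  intro τ _
  split
  · rw [chiTensor_stdb, if_neg (hg τ)]
  · rfl

lemma add_self_ML {i : ℕ} (y : ML ι i) : y + y = 0 := by
  have h2 : (2 : F2) = 0 := rfl
  calc y + y = (2 : F2) • y := (two_smul F2 y).symm
    _ = 0 := by rw [h2, zero_smul]

lemma cond_iff {i : ℕ} (hi : 2 ≤ i) {A : Finset ι} (τ : Fin i ≃ {a // a ∈ A})
    {x : ι} (hx : x ∈ A) :
    (∀ p : Fin i, ((τ p : ι) = x → i ≤ (p : ℕ) + 2)) ↔
      (x = ↑(τ ⟨i - 2, by omega⟩) ∨ x = ↑(τ ⟨i - 1, by omega⟩)) := by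
  constructor
  · intro h
    have hp := h (τ.symm ⟨x, hx⟩) (by simp)
    rcases (fin_last_two hi _).mp hp with h' | h' <;>
      [left; right] <;> rw [← h'] <;> simp
  · rintro (h | h) <;> intro p hp
    · have h' : τ p = τ ⟨i - 2, by omega⟩ := Subtype.ext (hp.trans h)
      rw [τ.injective h']
      show i ≤ (i - 2) + 2
      omega
    · have h' : τ p = τ ⟨i - 1, by omega⟩ := Subtype.ext (hp.trans h)
      rw [τ.injective h']
      show i ≤ (i - 1) + 2
      omega

lemma govTensor_sum {i : ℕ} (hi : 2 ≤ i) (A : Finset ι) :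
    ∑ x ∈ A, govTensor i A x = 0 := by
  unfold govTensor
  rw [Finset.sum_comm]
  apply Finset.sum_eq_zero
  intro τ _
  set u : ι := ↑(τ ⟨i - 2, by omega⟩) with hu
  set v : ι := ↑(τ ⟨i - 1, by omega⟩) with hv
  have huv : u ≠ v := by
    intro h
    have := τ.injective (Subtype.ext h)
    have := Fin.mk.injEq (i-2) _ (i-1) _ ▸ this
    omega
  have huA : u ∈ A := (τ _).2
  have hvA : v ∈ A := (τ _).2
  have hcong : ∀ x ∈ A,
      (if ∀ p : Fin i, ((τ p : ι) = x → i ≤ (p : ℕ) + 2) then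
        chiTensor i (fun p => (τ p : ι)) else 0)
      = if x = u ∨ x = v then chiTensor i (fun p => (τ p : ι)) else 0 := by
    intro x hx
    rw [if_congr (cond_iff hi τ hx) rfl rfl]
  rw [Finset.sum_congr rfl hcong, ← Finset.sum_filter]
  have hfil : A.filter (fun x => x = u ∨ x = v) = {u, v} := by
    ext y
    simp only [Finset.mem_filter, Finset.mem_insert, Finset.mem_singleton]
    constructor
    · tauto
    · rintro (rfl | rfl) <;> tauto
  rw [hfil, Finset.sum_pair huv]
  exact add_self_ML _


lemma range_eq {i : ℕ} {A A' : Finset ι} (τ : Fin i ≃ {a // a ∈ A}) (τ' : Fin i ≃ {a // a ∈ A'})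
    (h : (fun p => ((τ' p : ι))) = fun p => ((τ p : ι))) : A' = A := by
  ext y
  constructor
  · intro hy
    have h1 := congrFun h (τ'.symm ⟨y, hy⟩)
    simp only [Equiv.apply_symm_apply] at h1
    rw [h1]
    exact (τ _).2
  · intro hy
    have h1 := congrFun h (τ.symm ⟨y, hy⟩)
    simp only [Equiv.apply_symm_apply] at h1
    rw [← h1]
    exact (τ' _).2

lemma exists_equiv_prescribed {α β : Type} [DecidableEq β] (e : α ≃ β) {a b : α}
    (hab : a ≠ b) {c d : β} (hcd : c ≠ d) : ∃ τ : α ≃ β, τ a = c ∧ τ b = d := by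
  set τ₁ := e.trans (Equiv.swap c (e a)) with hτ₁
  have h1 : τ₁ a = c := by simp [hτ₁, Equiv.swap_apply_right]
  have hb : τ₁ b ≠ c := fun h => hab (τ₁.injective (h.trans h1.symm)).symm
  refine ⟨τ₁.trans (Equiv.swap d (τ₁ b)), ?_, ?_⟩
  · simp only [Equiv.trans_apply, h1]
    exact Equiv.swap_apply_of_ne_of_ne hcd (Ne.symm hb)
  · simp [Equiv.swap_apply_right]

end Lemmas


/-- Gauss-type dimension count for the space of governing tensors:
for `n ≥ 1` and `i ≥ 2`, `dim Gov(V_[n], i) = (i−1)·C(n,i)`. -/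
theorem statement0 (n : ℕ) (hn : 1 ≤ n) (i : ℕ) (hi : 2 ≤ i) :
    Module.finrank F2 (Gov (ι := Fin n) i Finset.univ) = (i - 1) * n.choose i := by
  classical
  set S : Finset (Finset (Fin n) × Fin n) :=
    (Finset.univ.powersetCard i).biUnion
      (fun A => (A.filter (fun x => A.max ≠ WithBot.some x)).image (fun x => (A, x)))
      with hS
  have memS : ∀ p : Finset (Fin n) × Fin n,
      p ∈ S ↔ p.1.card = i ∧ p.2 ∈ p.1 ∧ p.1.max ≠ WithBot.some p.2 := by
    rintro ⟨A, x⟩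
    simp only [hS, Finset.mem_biUnion, Finset.mem_powersetCard, Finset.mem_image,
      Finset.mem_filter, Prod.mk.injEq]
    constructor
    · rintro ⟨A', ⟨-, hc⟩, x', ⟨hx', hm'⟩, rfl, rfl⟩
      exact ⟨hc, hx', hm'⟩
    · rintro ⟨hc, hx, hm⟩
      exact ⟨A, ⟨Finset.subset_univ _, hc⟩, x, ⟨hx, hm⟩, rfl, rfl⟩
  set b : Finset (Fin n) × Fin n → ML (Fin n) i := fun p => govTensor i p.1 p.2 with hb
  have hGov : Gov (ι := Fin n) i Finset.univ = Submodule.span F2 (b '' ↑S) := by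
    apply le_antisymm
    · simp only [Gov]
      apply Submodule.span_le.mpr
      rintro φ ⟨A, x, -, hA, hx, rfl⟩
      by_cases hmax : A.max = WithBot.some x
      · have hsum := govTensor_sum (ι := Fin n) hi A
        rw [← Finset.add_sum_erase _ _ hx] at hsum
        have h2 : ∀ w : ML (Fin n) i, -w = w := fun w => by
          rw [← neg_one_smul F2 w, show (-1 : F2) = 1 from rfl, one_smul]
        have heq : govTensor i A x = ∑ y ∈ A.erase x, govTensor i A y := by
          have h3 := eq_neg_of_add_eq_zero_left hsum
          rw [h2] at h3; exact h3
        rw [SetLike.mem_coe, heq]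
        apply Submodule.sum_mem
        intro y hy
        rw [Finset.mem_erase] at hy
        apply Submodule.subset_span
        refine ⟨(A, y), ?_, rfl⟩
        rw [Finset.mem_coe, memS]
        refine ⟨hA, hy.2, ?_⟩
        rw [hmax]
        exact fun h => hy.1 (WithBot.coe_inj.mp h).symm
      · apply Submodule.subset_span
        refine ⟨(A, x), ?_, rfl⟩
        rw [Finset.mem_coe, memS]
        exact ⟨hA, hx, hmax⟩
    · apply Submodule.span_le.mpr
      rintro φ ⟨p, hp, rfl⟩
      rw [Finset.mem_coe, memS] at hp
      apply Submodule.subset_span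
      exact ⟨p.1, p.2, Finset.subset_univ _, hp.1, hp.2.1, rfl⟩
  have hli : LinearIndependent F2 (fun s : {x // x ∈ S} => b ↑s) := by
    rw [Fintype.linearIndependent_iff]
    intro c hc s
    obtain ⟨⟨A, x⟩, hs⟩ := s
    obtain ⟨hA, hx, hmax⟩ := (memS (A, x)).mp hs
    have hne : A.Nonempty := ⟨x, hx⟩
    set m := A.max' hne with hm
    have hmA : m ∈ A := A.max'_mem hne
    have hAmax : A.max = WithBot.some m := (Finset.coe_max' hne).symm
    have hxm : x ≠ m := fun h => hmax (by rw [hAmax, h])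
    have e : Fin i ≃ {a // a ∈ A} := (Finset.equivFinOfCardEq hA).symm
    have hab : (⟨i - 2, by omega⟩ : Fin i) ≠ ⟨i - 1, by omega⟩ := by
      intro h; rw [Fin.mk.injEq] at h; omega
    have hcd : (⟨x, hx⟩ : {a // a ∈ A}) ≠ ⟨m, hmA⟩ :=
      fun h => hxm (congrArg Subtype.val h)
    obtain ⟨τ₀, hτa, hτb⟩ := exists_equiv_prescribed e hab hcd
    have happ := congrArg (fun φ : ML (Fin n) i => φ (fun p => stdb ((τ₀ p : Fin n)))) hc
    simp only [MultilinearMap.sum_apply, MultilinearMap.smul_apply,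
      MultilinearMap.zero_apply] at happ
    rw [Finset.sum_eq_single (⟨(A, x), hs⟩ : {p // p ∈ S})] at happ
    · have hev : govTensor i A x (fun p => stdb ((τ₀ p : Fin n))) = 1 := by
        rw [govTensor_eval_equiv A x τ₀, if_pos]
        rw [cond_iff hi τ₀ hx]
        left
        rw [hτa]
      rw [hb] at happ
      rw [hev, smul_eq_mul, mul_one] at happ
      exact happ
    · rintro ⟨⟨A', x'⟩, hs'⟩ - hne'
      obtain ⟨hA', hx', hmax'⟩ := (memS (A', x')).mp hs'
      rw [hb]
      by_cases hAA : A' = A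
      · subst hAA
        have hxx : x' ≠ x := by
          intro h
          exact hne' (Subtype.ext (Prod.ext rfl h))
        have hev : govTensor i A' x' (fun p => stdb ((τ₀ p : Fin n))) = 0 := by
          rw [govTensor_eval_equiv A' x' τ₀, if_neg]
          rw [cond_iff hi τ₀ hx']
          rintro (h | h)
          · exact hxx (h.trans (congrArg Subtype.val hτa))
          · apply hmax'
            rw [hAmax, h.trans (congrArg Subtype.val hτb)]
        rw [hev, smul_zero]
      · have hev : govTensor i A' x' (fun p => stdb ((τ₀ p : Fin n))) = 0 := by
          apply govTensor_eval_zero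
          intro τ' hτ'
          exact hAA (range_eq τ₀ τ' hτ')
        rw [hev, smul_zero]
    · intro h
      exact absurd (Finset.mem_univ _) h
  have hcard : S.card = (i - 1) * n.choose i := by
    have hdisj : ∀ A ∈ ((Finset.univ : Finset (Fin n)).powersetCard i), ∀ A' ∈ ((Finset.univ : Finset (Fin n)).powersetCard i), A ≠ A' →
        Disjoint ((A.filter fun x => A.max ≠ WithBot.some x).image (fun x => (A, x)))
                 ((A'.filter fun x => A'.max ≠ WithBot.some x).image (fun x => (A', x))) := by
      intro A _ A' _ hne
      rw [Finset.disjoint_left]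
      rintro p hp hp'
      simp only [Finset.mem_image] at hp hp'
      obtain ⟨x, -, rfl⟩ := hp
      obtain ⟨x', -, h⟩ := hp'
      exact hne (congrArg Prod.fst h).symm
    rw [hS, Finset.card_biUnion hdisj]
    have hterm : ∀ A ∈ ((Finset.univ : Finset (Fin n)).powersetCard i),
        ((A.filter fun x => A.max ≠ WithBot.some x).image (fun x => (A, x))).card = i - 1 := by
      intro A hA
      rw [Finset.mem_powersetCard] at hA
      have hAc := hA.2
      have hne : A.Nonempty := Finset.card_pos.mp (by omega)
      rw [Finset.card_image_of_injective _
        (fun x y h => ((Prod.mk.injEq _ _ _ _).mp h).2)]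
      have hfe : A.filter (fun x => A.max ≠ WithBot.some x) = A.erase (A.max' hne) := by
        ext y
        simp only [Finset.mem_filter, Finset.mem_erase, ← Finset.coe_max' hne]
        constructor
        · rintro ⟨hy, hm⟩
          exact ⟨fun h => hm (by rw [h]), hy⟩
        · rintro ⟨hym, hy⟩
          refine ⟨hy, fun h => hym ?_⟩
          exact (WithBot.coe_inj.mp h).symm
      rw [hfe, Finset.card_erase_of_mem (A.max'_mem hne), hAc]
    rw [Finset.sum_congr rfl hterm, Finset.sum_const, Finset.card_powersetCard,
      Finset.card_univ, Fintype.card_fin, smul_eq_mul, mul_comm]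
  have hrange : b '' ↑S = Set.range (fun s : {x // x ∈ S} => b ↑s) := by
    ext φ
    simp [Set.mem_image, Set.mem_range, Subtype.exists, Finset.mem_coe]
  rw [hGov, hrange, finrank_span_eq_card hli, Fintype.card_coe, hcard]

end HigherGenus
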